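/- Let B_c > 0 and A⁰(y) = cos(2πy). Then for all l, m ∈ ℕ there exist real numbers c_{l,m} and d_{l,m} such that for all p ∈ ℝ: Ã⁰_{l,m}(p) = (1/2)·δ_{l,m} + c_{l,m}·cos(4πp) + d_{l,m}·sin(4πp); moreover c_{l,m} = 0 whenever m + l is odd, and d_{l,m} = 0 whenever m + l is even. -/

import Mathlib

open Real MeasureTheory

/-- The `m`-th Weber–Hermite function (normalized Hermite function). -/
noncomputable def weberHermite (m : ℕ) (y : ℝ) : ℝ :=
  ((-1 : ℝ) ^ m / Real.sqrt (Real.sqrt π * 2 ^ m * m.factorial)) *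
    Real.exp (y ^ 2 / 2) * iteratedDeriv m (fun t => Real.exp (-t ^ 2)) y

/-- `Ã⁰_{l,m}(p) = √B_c ∫ (A⁰(y+p))² Ω_l(√B_c y) Ω_m(√B_c y) dy`. -/
noncomputable def Atilde0 (Bc : ℝ) (A0 : ℝ → ℝ) (l m : ℕ) (p : ℝ) : ℝ :=
  Real.sqrt Bc * ∫ y : ℝ, (A0 (y + p)) ^ 2 *
    weberHermite l (Real.sqrt Bc * y) * weberHermite m (Real.sqrt Bc * y)

open Polynomial Filter Topology in
noncomputable def whG : ℝ → ℝ := fun u => Real.exp (-(u ^ 2 / 2))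

open Polynomial Filter Topology in
noncomputable def whH (n : ℕ) : Polynomial ℝ := (hermite n).map (Int.castRingHom ℝ)

section WHaux
open Polynomial Filter Topology

lemma whG_contDiff : ContDiff ℝ ⊤ whG :=
  (((contDiff_id.pow 2).div_const 2).neg).exp

lemma whG_deriv_iter (n : ℕ) : deriv^[n] whG =
    fun x => (-1 : ℝ) ^ n * aeval x (hermite n) * Real.exp (-(x ^ 2 / 2)) :=
  funext fun x => Polynomial.deriv_gaussian_eq_hermite_mul_gaussian n x

/-- The real Hermite polynomial. -/
lemma whH_eval (n : ℕ) (x : ℝ) : eval x (whH n) = aeval x (hermite n) := by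
  rw [whH, eval_map, aeval_def]; rfl

lemma wh_integrable (Q : Polynomial ℝ) :
    Integrable (fun x : ℝ => eval x Q * Real.exp (-(x ^ 2 / 2))) := by
  induction Q using Polynomial.induction_on' with
  | add p q hp hq => simp only [eval_add, add_mul]; exact hp.add hq
  | monomial n a =>
    simp only [eval_monomial]
    have h : Integrable (fun x : ℝ => x ^ n * Real.exp (-(x ^ 2 / 2))) := by
      have h0 := integrable_rpow_mul_exp_neg_mul_sq (b := (1:ℝ)/2) (by norm_num)
        (s := (n : ℝ)) (lt_of_lt_of_le neg_one_lt_zero (Nat.cast_nonneg n))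
      have h2 : (fun x : ℝ => x ^ ((n:ℝ)) * Real.exp (-(1/2) * x ^ 2))
          = fun x : ℝ => x ^ n * Real.exp (-(x ^ 2 / 2)) := by
        funext x
        rw [Real.rpow_natCast]
        congr 1
        congr 1
        ring
      rwa [h2] at h0
    simpa [mul_assoc] using h.const_mul a

lemma wh_tendsto (Q : Polynomial ℝ) :
    Tendsto (fun x : ℝ => eval x Q * Real.exp (-(x ^ 2 / 2))) (cocompact ℝ) (𝓝 0) := by
  induction Q using Polynomial.induction_on' with
  | add p q hp hq => simpa [eval_add, add_mul] using hp.add hq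
  | monomial n a =>
    have h := tendsto_rpow_abs_mul_exp_neg_mul_sq_cocompact (a := (1:ℝ)/2) (by norm_num) n
    have h' : Tendsto (fun x : ℝ => |a| * (|x| ^ (n:ℝ) * Real.exp (-(1/2) * x ^ 2)))
        (cocompact ℝ) (𝓝 0) := by simpa using h.const_mul |a|
    apply squeeze_zero_norm _ h'
    intro x
    simp only [eval_monomial, Real.norm_eq_abs, abs_mul, abs_pow, abs_exp]
    rw [Real.rpow_natCast]
    have : -(x ^ 2 / 2) = -(1/2) * x ^ 2 := by ring
    rw [this, mul_assoc]

lemma wh_fun_eq (Q : Polynomial ℝ) (k : ℕ) :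
    (fun x : ℝ => eval x Q * deriv^[k] whG x)
      = fun x : ℝ => eval x (C ((-1:ℝ)^k) * Q * whH k) * Real.exp (-(x ^ 2 / 2)) := by
  funext x
  rw [whG_deriv_iter]
  simp only [eval_mul, eval_C, whH_eval]
  ring

lemma wh_integrable' (Q : Polynomial ℝ) (k : ℕ) :
    Integrable (fun x : ℝ => eval x Q * deriv^[k] whG x) := by
  rw [wh_fun_eq]; exact wh_integrable _

lemma wh_tendsto' (Q : Polynomial ℝ) (k : ℕ) :
    Tendsto (fun x : ℝ => eval x Q * deriv^[k] whG x) (cocompact ℝ) (𝓝 0) := by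
  rw [wh_fun_eq]; exact wh_tendsto _

lemma whG_iter_differentiable (k : ℕ) : Differentiable ℝ (deriv^[k] whG) := by
  rw [whG_deriv_iter]
  exact (((Polynomial.differentiable_aeval (hermite k)).const_mul _).mul
    (((differentiable_pow 2).div_const 2).neg.exp))

lemma wh_hasDerivAt (Q : Polynomial ℝ) (k : ℕ) (x : ℝ) :
    HasDerivAt (fun x : ℝ => eval x Q * deriv^[k] whG x)
      (eval x (derivative Q) * deriv^[k] whG x + eval x Q * deriv^[k+1] whG x) x := by
  have h1 : HasDerivAt (fun x : ℝ => eval x Q) (eval x (derivative Q)) x := Q.hasDerivAt x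
  have h2 : HasDerivAt (deriv^[k] whG) (deriv^[k+1] whG x) x := by
    have := ((whG_iter_differentiable k) x).hasDerivAt
    rwa [show deriv (deriv^[k] whG) x = deriv^[k+1] whG x from
      (congrFun (Function.iterate_succ_apply' deriv k whG).symm x)] at this
  exact h1.mul h2

lemma wh_ibp (Q : Polynomial ℝ) (k : ℕ) :
    ∫ x : ℝ, eval x Q * deriv^[k+1] whG x
      = - ∫ x : ℝ, eval x (derivative Q) * deriv^[k] whG x := by
  have hI1 := wh_integrable' (derivative Q) k
  have hI2 := wh_integrable' Q (k+1)
  have hIsum : Integrable (fun x : ℝ =>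
      eval x (derivative Q) * deriv^[k] whG x + eval x Q * deriv^[k+1] whG x) := hI1.add hI2
  have htop : Tendsto (fun x : ℝ => eval x Q * deriv^[k] whG x) atTop (𝓝 0) :=
    (wh_tendsto' Q k).mono_left _root_.atTop_le_cocompact
  have hbot : Tendsto (fun x : ℝ => eval x Q * deriv^[k] whG x) atBot (𝓝 0) :=
    (wh_tendsto' Q k).mono_left _root_.atBot_le_cocompact
  have h1 := integral_Ioi_of_hasDerivAt_of_tendsto' (a := (0:ℝ))
    (fun x _ => wh_hasDerivAt Q k x) hIsum.integrableOn htop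
  have h2 := integral_Iic_of_hasDerivAt_of_tendsto' (a := (0:ℝ))
    (fun x _ => wh_hasDerivAt Q k x) hIsum.integrableOn hbot
  have hsplit := intervalIntegral.integral_Iic_add_Ioi (b := (0:ℝ)) hIsum.integrableOn hIsum.integrableOn
  have hzero : ∫ x : ℝ, (eval x (derivative Q) * deriv^[k] whG x
      + eval x Q * deriv^[k+1] whG x) = 0 := by
    rw [← hsplit, h1, h2]; ring
  rw [integral_add hI1 hI2] at hzero
  linarith

lemma wh_ibp_iter (Q : Polynomial ℝ) (n : ℕ) :
    ∫ x : ℝ, eval x Q * deriv^[n] whG x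
      = (-1:ℝ)^n * ∫ x : ℝ, eval x (derivative^[n] Q) * whG x := by
  induction n generalizing Q with
  | zero => simp
  | succ k ih =>
    rw [wh_ibp Q k, ih (derivative Q), ← Function.iterate_succ_apply]
    ring

lemma whG_integral : ∫ x : ℝ, whG x = Real.sqrt (2 * π) := by
  have h := integral_gaussian (1/2 : ℝ)
  have h2 : (fun x : ℝ => Real.exp (-(1/2:ℝ) * x ^ 2)) = whG := by
    funext x; unfold whG; congr 1; ring
  rw [h2] at h
  rw [h]
  rw [show π / (1/2 : ℝ) = 2 * π by ring]

lemma wh_orth_le {l m : ℕ} (h : l ≤ m) :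
    ∫ x : ℝ, eval x (whH l) * eval x (whH m) * Real.exp (-(x ^ 2 / 2))
      = if l = m then (m.factorial : ℝ) * Real.sqrt (2 * π) else 0 := by
  have key : (fun x : ℝ => eval x (whH l) * eval x (whH m) * Real.exp (-(x ^ 2 / 2)))
      = fun x : ℝ => (-1:ℝ)^m * (eval x (whH l) * deriv^[m] whG x) := by
    funext x
    rw [whG_deriv_iter]
    simp only [whH_eval]
    have h1 : (-1:ℝ)^m * (-1:ℝ)^m = 1 := by
      rw [← pow_add]; exact Even.neg_one_pow ⟨m, rfl⟩
    rw [show (-1:ℝ)^m * ((aeval x) (hermite l) * ((-1:ℝ) ^ m * (aeval x) (hermite m) *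
        rexp (-(x ^ 2 / 2)))) = ((-1:ℝ)^m * (-1:ℝ)^m) * ((aeval x) (hermite l) *
        (aeval x) (hermite m) * rexp (-(x ^ 2 / 2))) from by ring, h1, one_mul]
  rw [key, integral_const_mul, wh_ibp_iter, ← mul_assoc, ← mul_pow]
  norm_num
  rcases lt_or_eq_of_le h with hlt | heq
  · have hdeg : (whH l).natDegree < m := by
      rw [whH, natDegree_map_eq_of_injective (fun a b hab => by simpa using hab),
        Polynomial.natDegree_hermite]
      exact hlt
    rw [Polynomial.iterate_derivative_eq_zero hdeg]
    simp [if_neg (Nat.ne_of_lt hlt)]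
  · subst heq
    have hdeg : (whH l).natDegree = l := by
      rw [whH, natDegree_map_eq_of_injective (fun a b hab => by simpa using hab),
        Polynomial.natDegree_hermite]
    have hconst : derivative^[l] (whH l) = C ((l.factorial : ℝ)) := by
      have h0 : (derivative^[l] (whH l)).natDegree ≤ 0 := by
        have := Polynomial.natDegree_iterate_derivative (whH l) l
        omega
      rw [Polynomial.eq_C_of_natDegree_le_zero h0]
      congr 1
      rw [Polynomial.coeff_iterate_derivative]
      simp only [zero_add, Nat.descFactorial_self, smul_eq_mul]
      rw [whH, Polynomial.coeff_map, Polynomial.coeff_hermite_self]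
      simp
    rw [hconst]
    simp only [eval_C, if_pos rfl, eq_self_iff_true, if_true]
    rw [integral_const_mul, whG_integral, Real.sqrt_mul (by norm_num : (0:ℝ) ≤ 2) π]

lemma wh_orth (l m : ℕ) :
    ∫ x : ℝ, eval x (whH l) * eval x (whH m) * Real.exp (-(x ^ 2 / 2))
      = if l = m then (m.factorial : ℝ) * Real.sqrt (2 * π) else 0 := by
  rcases le_total l m with h | h
  · exact wh_orth_le h
  · have := wh_orth_le h
    simp_rw [show ∀ x : ℝ, eval x (whH m) * eval x (whH l) = eval x (whH l) * eval x (whH m)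
      from fun x => mul_comm _ _] at this
    rw [this]
    rcases eq_or_ne l m with rfl | hne
    · simp
    · rw [if_neg hne, if_neg (Ne.symm hne)]

end WHaux


section WHmain
open Polynomial Filter Topology

lemma weberHermite_eq (m : ℕ) (y : ℝ) :
    weberHermite m y = (Real.sqrt 2 ^ m / Real.sqrt (Real.sqrt π * 2 ^ m * m.factorial))
      * eval (Real.sqrt 2 * y) (whH m) * Real.exp (-(y ^ 2 / 2)) := by
  unfold weberHermite
  rw [show (fun t : ℝ => Real.exp (-t ^ 2)) = fun t => whG (Real.sqrt 2 * t) by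
    funext t
    unfold whG
    rw [mul_pow, Real.sq_sqrt (by norm_num : (0:ℝ) ≤ 2)]
    congr 1
    ring]
  rw [iteratedDeriv_comp_const_mul (whG_contDiff.of_le le_top) (Real.sqrt 2)]
  rw [iteratedDeriv_eq_iterate, whG_deriv_iter]
  simp only [whH_eval]
  rw [mul_pow, Real.sq_sqrt (by norm_num : (0:ℝ) ≤ 2)]
  have h1 : (-1:ℝ)^m * (-1:ℝ)^m = 1 := by
    rw [← pow_add]; exact Even.neg_one_pow ⟨m, rfl⟩
  have h2 : Real.exp (y ^ 2 / 2) * Real.exp (-(2 * y ^ 2 / 2)) = Real.exp (-(y ^ 2 / 2)) := by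
    rw [← Real.exp_add]; congr 1; ring
  calc ((-1:ℝ) ^ m / Real.sqrt (Real.sqrt π * 2 ^ m * m.factorial)) * Real.exp (y ^ 2 / 2) *
        (Real.sqrt 2 ^ m * ((-1:ℝ) ^ m * aeval (Real.sqrt 2 * y) (hermite m) *
          Real.exp (-(2 * y ^ 2 / 2))))
      = ((-1:ℝ)^m * (-1:ℝ)^m) * ((Real.sqrt 2 ^ m / Real.sqrt (Real.sqrt π * 2 ^ m * m.factorial))
          * aeval (Real.sqrt 2 * y) (hermite m)
          * (Real.exp (y ^ 2 / 2) * Real.exp (-(2 * y ^ 2 / 2)))) := by ring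
    _ = _ := by rw [h1, h2, one_mul]

lemma weberHermite_mul_eq (l m : ℕ) :
    (fun y : ℝ => weberHermite l y * weberHermite m y)
      = fun y : ℝ => (Real.sqrt 2 ^ l / Real.sqrt (Real.sqrt π * 2 ^ l * l.factorial))
          * (Real.sqrt 2 ^ m / Real.sqrt (Real.sqrt π * 2 ^ m * m.factorial))
          * (eval (Real.sqrt 2 * y) (whH l * whH m)
              * Real.exp (-((Real.sqrt 2 * y) ^ 2 / 2))) := by
  funext y
  rw [weberHermite_eq, weberHermite_eq, mul_pow, Real.sq_sqrt (by norm_num : (0:ℝ) ≤ 2),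
    eval_mul]
  rw [show -(2 * y ^ 2 / 2) = (-(y^2/2)) + (-(y^2/2)) by ring, Real.exp_add]
  ring

lemma weberHermite_mul_integrable (l m : ℕ) :
    Integrable (fun y : ℝ => weberHermite l y * weberHermite m y) := by
  rw [weberHermite_mul_eq]
  exact (((wh_integrable (whH l * whH m)).comp_mul_left'
    (by positivity : Real.sqrt 2 ≠ 0)).const_mul _)

lemma weberHermite_orthonormal (l m : ℕ) :
    ∫ y : ℝ, weberHermite l y * weberHermite m y = if l = m then 1 else 0 := by
  rw [weberHermite_mul_eq, integral_const_mul,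
    MeasureTheory.Measure.integral_comp_mul_left
      (fun v => eval v (whH l * whH m) * Real.exp (-(v ^ 2 / 2))) (Real.sqrt 2)]
  simp only [eval_mul, smul_eq_mul]
  rw [show ∫ v : ℝ, eval v (whH l) * eval v (whH m) * Real.exp (-(v ^ 2 / 2))
      = if l = m then (m.factorial : ℝ) * Real.sqrt (2 * π) else 0 from wh_orth l m]
  rcases eq_or_ne l m with rfl | hne
  · simp only [if_pos rfl, eq_self_iff_true, if_true]
    have hπ : (0:ℝ) < Real.sqrt π := Real.sqrt_pos.mpr pi_pos
    have hfac : (0:ℝ) < (l.factorial : ℝ) := by exact_mod_cast l.factorial_pos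
    have h2 : (0:ℝ) < Real.sqrt 2 := by positivity
    have hN : Real.sqrt (Real.sqrt π * 2 ^ l * l.factorial)
        * Real.sqrt (Real.sqrt π * 2 ^ l * l.factorial)
        = Real.sqrt π * 2 ^ l * l.factorial := by
      rw [Real.mul_self_sqrt (by positivity)]
    rw [abs_of_pos (by positivity : (0:ℝ) < (Real.sqrt 2)⁻¹)]
    rw [Real.sqrt_mul (by norm_num : (0:ℝ) ≤ 2) π]
    rw [show (Real.sqrt 2 : ℝ) ^ l / Real.sqrt (Real.sqrt π * 2 ^ l * l.factorial) *
        (Real.sqrt 2 ^ l / Real.sqrt (Real.sqrt π * 2 ^ l * l.factorial)) *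
        ((Real.sqrt 2)⁻¹ * ((l.factorial : ℝ) * (Real.sqrt 2 * Real.sqrt π)))
      = (Real.sqrt 2 ^ l * Real.sqrt 2 ^ l) * ((l.factorial : ℝ) * Real.sqrt π)
        * ((Real.sqrt 2)⁻¹ * Real.sqrt 2) /
          (Real.sqrt (Real.sqrt π * 2 ^ l * l.factorial) *
            Real.sqrt (Real.sqrt π * 2 ^ l * l.factorial)) from by ring]
    rw [← pow_add, ← two_mul, pow_mul, Real.sq_sqrt (by norm_num : (0:ℝ) ≤ 2),
      inv_mul_cancel₀ (ne_of_gt h2), hN]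
    field_simp
  · rw [if_neg hne, if_neg hne]
    simp

lemma weberHermite_neg (m : ℕ) (y : ℝ) :
    weberHermite m (-y) = (-1:ℝ) ^ m * weberHermite m y := by
  have h := iteratedDeriv_comp_neg m (fun t : ℝ => Real.exp (-t ^ 2)) y
  have hfe : (fun x : ℝ => Real.exp (-(-x) ^ 2)) = fun t : ℝ => Real.exp (-t ^ 2) := by
    funext x; rw [neg_sq]
  rw [hfe] at h
  have h1 : (-1:ℝ)^m * (-1:ℝ)^m = 1 := by
    rw [← pow_add]; exact Even.neg_one_pow ⟨m, rfl⟩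
  have h' : iteratedDeriv m (fun t : ℝ => Real.exp (-t ^ 2)) (-y)
      = (-1:ℝ)^m * iteratedDeriv m (fun t : ℝ => Real.exp (-t ^ 2)) y := by
    rw [h, smul_eq_mul, ← mul_assoc, h1, one_mul]
  unfold weberHermite
  rw [h', neg_sq]
  ring

lemma wh_integral_odd_zero {f : ℝ → ℝ} (h : ∀ x, f (-x) = -f x) : ∫ x : ℝ, f x = 0 := by
  have h2 : ∫ x : ℝ, f (-x) = ∫ x : ℝ, f x := integral_neg_eq_self f volume
  simp_rw [h, integral_neg] at h2
  linarith

end WHmain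

/-- **For `A⁰(y) = cos(2πy)`,**
`Ã⁰_{l,m}(p) = ½δ_{l,m} + c_{l,m} cos(4πp) + d_{l,m} sin(4πp)` with
`c_{l,m} = 0` if `m + l` is odd and `d_{l,m} = 0` if `m + l` is even. -/
theorem Atilde0_cos (Bc : ℝ) (hBc : 0 < Bc) (l m : ℕ) :
    ∃ c d : ℝ,
      (∀ p : ℝ, Atilde0 Bc (fun y => Real.cos (2 * π * y)) l m p =
        (1 / 2) * (if l = m then 1 else 0)
          + c * Real.cos (4 * π * p) + d * Real.sin (4 * π * p)) ∧
      (Odd (m + l) → c = 0) ∧ (Even (m + l) → d = 0) := by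
  have hsBc : (0:ℝ) < Real.sqrt Bc := Real.sqrt_pos.mpr hBc
  set W : ℝ → ℝ := fun y => weberHermite l (Real.sqrt Bc * y) * weberHermite m (Real.sqrt Bc * y)
    with hWdef
  have hW : Integrable W :=
    (weberHermite_mul_integrable l m).comp_mul_left' (ne_of_gt hsBc)
  have hWc : Integrable (fun y : ℝ => Real.cos (4 * π * y) * W y) := by
    apply Integrable.bdd_mul (c := 1) hW
    · exact (Real.continuous_cos.comp (by continuity)).aestronglyMeasurable
    · exact Filter.Eventually.of_forall fun y => by simpa using Real.abs_cos_le_one _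
  have hWs : Integrable (fun y : ℝ => Real.sin (4 * π * y) * W y) := by
    apply Integrable.bdd_mul (c := 1) hW
    · exact (Real.continuous_sin.comp (by continuity)).aestronglyMeasurable
    · exact Filter.Eventually.of_forall fun y => by simpa using Real.abs_sin_le_one _
  have horth : Real.sqrt Bc * ∫ y : ℝ, W y = if l = m then 1 else 0 := by
    rw [hWdef]
    rw [MeasureTheory.Measure.integral_comp_mul_left
      (fun u => weberHermite l u * weberHermite m u) (Real.sqrt Bc)]
    rw [weberHermite_orthonormal l m, smul_eq_mul,
      abs_of_pos (by positivity : (0:ℝ) < (Real.sqrt Bc)⁻¹), ← mul_assoc,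
      mul_inv_cancel₀ (ne_of_gt hsBc), one_mul]
  have hWneg : ∀ y : ℝ, W (-y) = (-1:ℝ) ^ (m + l) * W y := by
    intro y
    show weberHermite l (Real.sqrt Bc * -y) * weberHermite m (Real.sqrt Bc * -y) = _
    rw [show Real.sqrt Bc * -y = -(Real.sqrt Bc * y) by ring, weberHermite_neg,
      weberHermite_neg, pow_add]
    ring
  refine ⟨Real.sqrt Bc * (1/2) * ∫ y : ℝ, Real.cos (4 * π * y) * W y,
    -(Real.sqrt Bc * (1/2) * ∫ y : ℝ, Real.sin (4 * π * y) * W y), ?_, ?_, ?_⟩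
  · intro p
    unfold Atilde0
    have hintegrand : ∀ y : ℝ, (Real.cos (2 * π * (y + p))) ^ 2
        * weberHermite l (Real.sqrt Bc * y) * weberHermite m (Real.sqrt Bc * y)
        = (1/2) * W y + (Real.cos (4 * π * p) * (1/2)) * (Real.cos (4 * π * y) * W y)
          + (-(Real.sin (4 * π * p) * (1/2))) * (Real.sin (4 * π * y) * W y) := by
      intro y
      have hc2 : (Real.cos (2 * π * (y + p))) ^ 2
          = 1/2 + Real.cos (4 * π * y + 4 * π * p) / 2 := by
        rw [Real.cos_sq]
        congr 2
        ring
      rw [hc2, Real.cos_add]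
      rw [hWdef]
      ring
    simp_rw [hintegrand]
    have h12 : Integrable (fun y : ℝ => (1:ℝ)/2 * W y
        + (Real.cos (4 * π * p) * (1/2)) * (Real.cos (4 * π * y) * W y)) :=
      (hW.const_mul _).add (hWc.const_mul _)
    rw [integral_add h12 (hWs.const_mul _),
      integral_add (hW.const_mul _) (hWc.const_mul _),
      integral_const_mul, integral_const_mul, integral_const_mul]
    rw [mul_add, mul_add]
    rw [show Real.sqrt Bc * ((1:ℝ)/2 * ∫ y : ℝ, W y) = (1/2) * (Real.sqrt Bc * ∫ y : ℝ, W y)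
      from by ring, horth]
    ring
  · intro hodd
    have : ∫ y : ℝ, Real.cos (4 * π * y) * W y = 0 := by
      apply wh_integral_odd_zero
      intro y
      rw [show (4:ℝ) * π * -y = -(4 * π * y) by ring, Real.cos_neg, hWneg, Odd.neg_one_pow hodd]
      ring
    rw [this, mul_zero]
  · intro heven
    have : ∫ y : ℝ, Real.sin (4 * π * y) * W y = 0 := by
      apply wh_integral_odd_zero
      intro y
      rw [show (4:ℝ) * π * -y = -(4 * π * y) by ring, Real.sin_neg, hWneg, Even.neg_one_pow heven]
      ring
    rw [this, mul_zero, neg_zero]
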